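/- Let $X$ be a centred Gaussian random element in a separable Banach space $\mathbb{B}$ with Karhunen–Loève expansion $X = \sum_{i=1}^\infty \xi_i x_i$ (convergence almost surely in norm, where $\xi_i$ are i.i.d. standard normal and $x_i \in \mathbb{B}$), and let $K \subseteq \mathbb{B}$ be a closed, convex, symmetric set. Then $\Pr(X \in K) = \lim_{n\to\infty} \Pr\big(\sum_{i=1}^n \xi_i x_i \in K\big)$. -/

import Mathlib

open MeasureTheory ProbabilityTheory Filter
open Set
open scoped ENNReal NNReal

section Aux

open Real

lemma vol_preimage_two_mul_sub (c : ℝ) (W : Set ℝ) :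
    volume ((fun y : ℝ => 2 * y - c) ⁻¹' W) = 2⁻¹ * volume W := by
  have : (fun y : ℝ => 2 * y - c) = (fun z => z + (-c)) ∘ (fun y => 2 * y) := by
    funext y; simp [sub_eq_add_neg]
  rw [this, Set.preimage_comp, Real.volume_preimage_mul_left two_ne_zero,
    measure_preimage_add_right volume (-c) W]
  rw [abs_of_pos (by norm_num : (0:ℝ) < (2:ℝ)⁻¹), ENNReal.ofReal_inv_of_pos two_pos,
    ENNReal.ofReal_ofNat]

/-- midpoint set inequality for compacts in ℝ -/
lemma mid_compact {K₁ K₂ : Set ℝ} (h₁ : IsCompact K₁) (h₂ : IsCompact K₂)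
    (ne₁ : K₁.Nonempty) (ne₂ : K₂.Nonempty) {S : Set ℝ}
    (hS : ∀ a ∈ K₁, ∀ b ∈ K₂, (a + b) / 2 ∈ S) :
    2⁻¹ * volume K₁ + 2⁻¹ * volume K₂ ≤ volume S := by
  set a := sSup K₁ with ha_def
  have ha : a ∈ K₁ := h₁.sSup_mem ne₁
  set b := sInf K₂ with hb_def
  have hb : b ∈ K₂ := h₂.sInf_mem ne₂
  set U : Set ℝ := (fun y => 2 * y - b) ⁻¹' K₁ with hU_def
  set V : Set ℝ := (fun y => 2 * y - a) ⁻¹' K₂ with hV_def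
  have hVmeas : MeasurableSet V :=
    h₂.isClosed.measurableSet.preimage (by fun_prop)
  have hUS : U ⊆ S := by
    intro y hy
    have h := hS _ hy _ hb
    have he : (2 * y - b + b) / 2 = y := by ring
    rwa [he] at h
  have hVS : V ⊆ S := by
    intro y hy
    have h := hS _ ha _ hy
    have he : (a + (2 * y - a)) / 2 = y := by ring
    rwa [he] at h
  have hUle : U ⊆ Iic ((a + b) / 2) := by
    intro y hy
    have : 2 * y - b ≤ a := le_csSup h₁.bddAbove hy
    simp only [mem_Iic]; linarith
  have hVge : V ⊆ Ici ((a + b) / 2) := by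
    intro y hy
    have : b ≤ 2 * y - a := csInf_le h₂.bddBelow hy
    simp only [mem_Ici]; linarith
  have hInter : volume (U ∩ V) = 0 := by
    have : U ∩ V ⊆ {(a + b) / 2} := by
      intro y ⟨hyU, hyV⟩
      have h1 := hUle hyU
      have h2 := hVge hyV
      simp only [mem_Iic] at h1
      simp only [mem_Ici] at h2
      simp [le_antisymm h1 h2]
    exact measure_mono_null this (measure_singleton _)
  calc 2⁻¹ * volume K₁ + 2⁻¹ * volume K₂ = volume U + volume V := by
        rw [hU_def, hV_def, vol_preimage_two_mul_sub, vol_preimage_two_mul_sub]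
    _ = volume (U ∪ V) + volume (U ∩ V) := (measure_union_add_inter U hVmeas).symm
    _ = volume (U ∪ V) := by rw [hInter, add_zero]
    _ ≤ volume S := measure_mono (union_subset hUS hVS)

/-- midpoint set inequality for measurable sets in ℝ -/
lemma mid_measurable {A B : Set ℝ} (hA : MeasurableSet A) (hB : MeasurableSet B)
    (neA : A.Nonempty) (neB : B.Nonempty) {S : Set ℝ}
    (hS : ∀ a ∈ A, ∀ b ∈ B, (a + b) / 2 ∈ S) :
    2⁻¹ * volume A + 2⁻¹ * volume B ≤ volume S := by
  have key : ∀ K₁ ⊆ A, ∀ K₂ ⊆ B, IsCompact K₁ → IsCompact K₂ →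
      2⁻¹ * volume K₁ + 2⁻¹ * volume K₂ ≤ volume S := by
    intro K₁ hK₁ K₂ hK₂ hc₁ hc₂
    obtain ⟨a₀, ha₀⟩ := neA
    obtain ⟨b₀, hb₀⟩ := neB
    have hK₁' : 2⁻¹ * volume K₁ ≤ 2⁻¹ * volume (K₁ ∪ {a₀}) := by
      gcongr; exact subset_union_left
    have hK₂' : 2⁻¹ * volume K₂ ≤ 2⁻¹ * volume (K₂ ∪ {b₀}) := by
      gcongr; exact subset_union_left
    refine le_trans (add_le_add hK₁' hK₂') ?_
    refine mid_compact (hc₁.union isCompact_singleton) (hc₂.union isCompact_singleton)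
      ⟨a₀, Or.inr rfl⟩ ⟨b₀, Or.inr rfl⟩ ?_
    intro p hp q hq
    refine hS p ?_ q ?_
    · rcases hp with hp | hp
      · exact hK₁ hp
      · simpa using hp ▸ ha₀
    · rcases hq with hq | hq
      · exact hK₂ hq
      · simpa using hq ▸ hb₀
  rw [hA.measure_eq_iSup_isCompact, hB.measure_eq_iSup_isCompact]
  simp_rw [ENNReal.mul_iSup]
  refine ENNReal.biSup_add_biSup_le' (p := fun K => K ⊆ A) (q := fun K => K ⊆ B)
    ⟨∅, empty_subset _⟩ ⟨∅, empty_subset _⟩ ?_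
  intro K₁ h₁ K₂ h₂
  by_cases hc₁ : IsCompact K₁
  · by_cases hc₂ : IsCompact K₂
    · rw [iSup_pos hc₁, iSup_pos hc₂]
      exact key K₁ h₁ K₂ h₂ hc₁ hc₂
    · rw [iSup_pos hc₁, iSup_neg hc₂, bot_eq_zero, add_zero]
      have := key K₁ h₁ ∅ (empty_subset _) hc₁ isCompact_empty
      simpa using this
  · rw [iSup_neg hc₁, bot_eq_zero, zero_add]
    by_cases hc₂ : IsCompact K₂
    · rw [iSup_pos hc₂]
      have := key ∅ (empty_subset _) K₂ h₂ isCompact_empty hc₂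
      simpa using this
    · rw [iSup_neg hc₂, bot_eq_zero]
      exact zero_le

lemma cov_scale (φ : ℝ → ℝ≥0∞) (hφ : Measurable φ) {c : ℝ} (hc : 0 < c) :
    ∫⁻ t in Set.Ioo 0 c, φ t = ENNReal.ofReal c * ∫⁻ u in Set.Ioo (0:ℝ) 1, φ (c * u) := by
  have hmap : Measure.map (fun u : ℝ => c * u) volume = ENNReal.ofReal |c⁻¹| • volume :=
    Real.map_volume_mul_left hc.ne'
  have hvol : (volume : Measure ℝ) = ENNReal.ofReal c • Measure.map (fun u : ℝ => c * u) volume := by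
    rw [hmap, smul_smul, ← ENNReal.ofReal_mul hc.le, abs_of_pos (inv_pos.mpr hc),
      mul_inv_cancel₀ hc.ne', ENNReal.ofReal_one, one_smul]
  have hind : Measurable ((Set.Ioo (0:ℝ) c).indicator φ) :=
    hφ.indicator measurableSet_Ioo
  calc ∫⁻ t in Set.Ioo 0 c, φ t = ∫⁻ t, (Set.Ioo (0:ℝ) c).indicator φ t ∂volume := by
        rw [← lintegral_indicator measurableSet_Ioo]
    _ = ENNReal.ofReal c * ∫⁻ t, (Set.Ioo (0:ℝ) c).indicator φ t
          ∂(Measure.map (fun u : ℝ => c * u) volume) := by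
        conv_lhs => rw [hvol]
        rw [lintegral_smul_measure, smul_eq_mul]
    _ = ENNReal.ofReal c * ∫⁻ u, (Set.Ioo (0:ℝ) c).indicator φ (c * u) ∂volume := by
        rw [lintegral_map hind (measurable_const_mul c)]
    _ = ENNReal.ofReal c * ∫⁻ u in Set.Ioo (0:ℝ) 1, φ (c * u) := by
        congr 1
        rw [← lintegral_indicator measurableSet_Ioo]
        congr 1
        funext u
        have hiff : c * u ∈ Set.Ioo 0 c ↔ u ∈ Set.Ioo (0:ℝ) 1 := by
          constructor
          · rintro ⟨h1, h2⟩
            have hu0 : 0 < u := by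
              by_contra hu0
              push_neg at hu0
              nlinarith
            refine ⟨hu0, ?_⟩
            nlinarith
          · rintro ⟨h1, h2⟩
            exact ⟨by positivity, by nlinarith⟩
        by_cases hu : u ∈ Set.Ioo (0:ℝ) 1
        · rw [Set.indicator_of_mem (hiff.mpr hu), Set.indicator_of_mem hu]
        · rw [Set.indicator_of_notMem (fun h => hu (hiff.mp h)),
            Set.indicator_of_notMem hu]

lemma amgm_ennreal (x y : ℝ≥0∞) : x * y ≤ (2⁻¹ * x + 2⁻¹ * y) ^ 2 := by
  rcases eq_or_ne x ⊤ with hx | hx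
  · rcases eq_or_ne y 0 with hy | hy
    · simp [hy]
    · subst hx
      have h2 : (2⁻¹ : ℝ≥0∞) * ⊤ = ⊤ := by simp [ENNReal.mul_top]
      rw [h2]
      simp [ENNReal.top_pow]
  rcases eq_or_ne y ⊤ with hy | hy
  · subst hy
    have h2 : (2⁻¹ : ℝ≥0∞) * ⊤ = ⊤ := by simp [ENNReal.mul_top]
    rw [h2]
    simp [ENNReal.top_pow]
  lift x to ℝ≥0 using hx
  lift y to ℝ≥0 using hy
  have h2 : (2⁻¹ : ℝ≥0∞) = ((2⁻¹ : ℝ≥0) : ℝ≥0∞) := by simp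
  rw [h2, ← ENNReal.coe_mul, ← ENNReal.coe_mul (2⁻¹) y, ← ENNReal.coe_mul,
    ← ENNReal.coe_add, ← ENNReal.coe_pow, ENNReal.coe_le_coe, ← NNReal.coe_le_coe]
  push_cast
  nlinarith [sq_nonneg ((x:ℝ) - (y:ℝ)), x.coe_nonneg, y.coe_nonneg]

lemma dim1 {f g h : ℝ → ℝ} (hf : Measurable f) (hg : Measurable g) (hh : Measurable h)
    (hf0 : ∀ a, 0 ≤ f a) (hf1 : ∀ a, f a ≤ 1)
    (hg0 : ∀ a, 0 ≤ g a) (hg1 : ∀ a, g a ≤ 1)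
    (hh0 : ∀ a, 0 ≤ h a)
    (hyp : ∀ a b, f a * g b ≤ h ((a + b) / 2) ^ 2) :
    (∫⁻ a, ENNReal.ofReal (f a)) * (∫⁻ a, ENNReal.ofReal (g a)) ≤
      (∫⁻ a, ENNReal.ofReal (h a)) ^ 2 := by
  classical
  set Mf := ⨆ a, f a with hMf_def
  set Mg := ⨆ a, g a with hMg_def
  have hbddf : BddAbove (Set.range f) := ⟨1, by rintro _ ⟨a, rfl⟩; exact hf1 a⟩
  have hbddg : BddAbove (Set.range g) := ⟨1, by rintro _ ⟨a, rfl⟩; exact hg1 a⟩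
  have hMlef : ∀ a, f a ≤ Mf := fun a => le_ciSup hbddf a
  have hMleg : ∀ a, g a ≤ Mg := fun a => le_ciSup hbddg a
  by_cases hMf0 : Mf ≤ 0
  · have hzero : (∫⁻ a, ENNReal.ofReal (f a)) = 0 := by
      have : ∀ a, ENNReal.ofReal (f a) = 0 :=
        fun a => ENNReal.ofReal_eq_zero.mpr ((hMlef a).trans hMf0)
      simp [this]
    rw [hzero, zero_mul]; exact zero_le
  by_cases hMg0 : Mg ≤ 0
  · have hzero : (∫⁻ a, ENNReal.ofReal (g a)) = 0 := by
      have : ∀ a, ENNReal.ofReal (g a) = 0 :=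
        fun a => ENNReal.ofReal_eq_zero.mpr ((hMleg a).trans hMg0)
      simp [this]
    rw [hzero, mul_zero]; exact zero_le
  push_neg at hMf0 hMg0
  set c := Real.sqrt (Mf * Mg) with hc_def
  have hc : 0 < c := Real.sqrt_pos.mpr (by positivity)
  set φf := fun t : ℝ => volume {a | t < f a} with hφf_def
  set φg := fun t : ℝ => volume {a | t < g a} with hφg_def
  set φh := fun t : ℝ => volume {a | t < h a} with hφh_def
  have hAntf : Antitone φf := fun s t hst => measure_mono (fun a ha => lt_of_le_of_lt hst ha)
  have hAntg : Antitone φg := fun s t hst => measure_mono (fun a ha => lt_of_le_of_lt hst ha)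
  have hAnth : Antitone φh := fun s t hst => measure_mono (fun a ha => lt_of_le_of_lt hst ha)
  -- layer cake and tail
  have tail : ∀ (q : ℝ → ℝ) (φq : ℝ → ℝ≥0∞), (∀ a, q a ≤ ⨆ a, q a) → 0 < (⨆ a, q a) →
      φq = (fun t => volume {a | t < q a}) →
      ∫⁻ t in Ioi (0:ℝ), φq t = ∫⁻ t in Ioo 0 (⨆ a, q a), φq t := by
    intro q φq hle hpos hdef
    rw [← Set.Ioo_union_Ici_eq_Ioi hpos, lintegral_union measurableSet_Ici
      (by
        refine Set.disjoint_left.mpr ?_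
        rintro t ⟨_, ht2⟩ ht3
        exact absurd ht3 (not_le.mpr ht2))]
    have hzero : ∀ t ∈ Ici (⨆ a, q a), φq t = 0 := by
      intro t ht
      have : {a | t < q a} = ∅ := by
        ext a; simp only [mem_setOf_eq, mem_empty_iff_false, iff_false, not_lt]
        exact (hle a).trans ht
      simp [hdef, this]
    rw [setLIntegral_congr_fun measurableSet_Ici hzero]
    simp
  have Ef : (∫⁻ a, ENNReal.ofReal (f a)) =
      ENNReal.ofReal Mf * ∫⁻ u in Ioo (0:ℝ) 1, φf (Mf * u) := by
    rw [lintegral_eq_lintegral_meas_lt volume (Filter.Eventually.of_forall hf0) hf.aemeasurable,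
      tail f φf hMlef hMf0 rfl, cov_scale φf hAntf.measurable hMf0]
  have Eg : (∫⁻ a, ENNReal.ofReal (g a)) =
      ENNReal.ofReal Mg * ∫⁻ u in Ioo (0:ℝ) 1, φg (Mg * u) := by
    rw [lintegral_eq_lintegral_meas_lt volume (Filter.Eventually.of_forall hg0) hg.aemeasurable,
      tail g φg hMleg hMg0 rfl, cov_scale φg hAntg.measurable hMg0]
  have Eh : ENNReal.ofReal c * ∫⁻ u in Ioo (0:ℝ) 1, φh (c * u) ≤
      ∫⁻ a, ENNReal.ofReal (h a) := by
    rw [← cov_scale φh hAnth.measurable hc,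
      lintegral_eq_lintegral_meas_lt volume (Filter.Eventually.of_forall hh0) hh.aemeasurable]
    exact lintegral_mono_set Ioo_subset_Ioi_self
  -- pointwise level inequality
  have key : ∀ u ∈ Ioo (0:ℝ) 1, 2⁻¹ * φf (Mf * u) + 2⁻¹ * φg (Mg * u) ≤ φh (c * u) := by
    rintro u ⟨hu0, hu1⟩
    have hneA : {a | Mf * u < f a}.Nonempty := by
      obtain ⟨a, ha⟩ := exists_lt_of_lt_ciSup (show Mf * u < Mf by nlinarith)
      exact ⟨a, ha⟩
    have hneB : {a | Mg * u < g a}.Nonempty := by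
      obtain ⟨a, ha⟩ := exists_lt_of_lt_ciSup (show Mg * u < Mg by nlinarith)
      exact ⟨a, ha⟩
    refine mid_measurable (measurableSet_lt measurable_const hf)
      (measurableSet_lt measurable_const hg) hneA hneB ?_
    intro a ha b hb
    simp only [mem_setOf_eq] at ha hb ⊢
    have h1 : Mf * u * (Mg * u) < f a * g b :=
      mul_lt_mul'' ha hb (by positivity) (by positivity)
    have h2 : (c * u) ^ 2 = Mf * u * (Mg * u) := by
      rw [mul_pow, hc_def, Real.sq_sqrt (by positivity)]; ring
    have h3 : (c * u) ^ 2 < h ((a + b) / 2) ^ 2 := by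
      rw [h2]; exact h1.trans_le (hyp a b)
    by_contra hle
    push_neg at hle
    exact absurd (pow_le_pow_left₀ (hh0 _) hle 2) (not_le.mpr h3)
  -- integrate level inequality
  have hmeasf : Measurable fun u : ℝ => φf (Mf * u) :=
    hAntf.measurable.comp (measurable_const_mul Mf)
  have hmeasg : Measurable fun u : ℝ => φg (Mg * u) :=
    hAntg.measurable.comp (measurable_const_mul Mg)
  have hmeash : Measurable fun u : ℝ => φh (c * u) :=
    hAnth.measurable.comp (measurable_const_mul c)
  have Zsum : 2⁻¹ * (∫⁻ u in Ioo (0:ℝ) 1, φf (Mf * u)) +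
      2⁻¹ * (∫⁻ u in Ioo (0:ℝ) 1, φg (Mg * u)) ≤ ∫⁻ u in Ioo (0:ℝ) 1, φh (c * u) := by
    have := setLIntegral_mono (μ := volume) (s := Ioo (0:ℝ) 1) hmeash key
    calc 2⁻¹ * (∫⁻ u in Ioo (0:ℝ) 1, φf (Mf * u)) +
        2⁻¹ * (∫⁻ u in Ioo (0:ℝ) 1, φg (Mg * u))
        = ∫⁻ u in Ioo (0:ℝ) 1, (2⁻¹ * φf (Mf * u) + 2⁻¹ * φg (Mg * u)) := by
          rw [lintegral_add_left (hmeasf.const_mul _), lintegral_const_mul _ hmeasf,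
            lintegral_const_mul _ hmeasg]
      _ ≤ _ := this
  -- conclude
  set Zf := ∫⁻ u in Ioo (0:ℝ) 1, φf (Mf * u)
  set Zg := ∫⁻ u in Ioo (0:ℝ) 1, φg (Mg * u)
  set Zh := ∫⁻ u in Ioo (0:ℝ) 1, φh (c * u)
  have hcsq : ENNReal.ofReal Mf * ENNReal.ofReal Mg = ENNReal.ofReal c ^ 2 := by
    rw [← ENNReal.ofReal_pow hc.le, hc_def, Real.sq_sqrt (by positivity),
      ENNReal.ofReal_mul hMf0.le]
  calc (∫⁻ a, ENNReal.ofReal (f a)) * (∫⁻ a, ENNReal.ofReal (g a))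
      = ENNReal.ofReal Mf * ENNReal.ofReal Mg * (Zf * Zg) := by rw [Ef, Eg]; ring
    _ ≤ ENNReal.ofReal Mf * ENNReal.ofReal Mg * ((2⁻¹ * Zf + 2⁻¹ * Zg) ^ 2) := by
        gcongr; exact amgm_ennreal Zf Zg
    _ ≤ ENNReal.ofReal Mf * ENNReal.ofReal Mg * Zh ^ 2 := by gcongr <;> exact Zsum
    _ = (ENNReal.ofReal c * Zh) ^ 2 := by rw [hcsq]; ring
    _ ≤ (∫⁻ a, ENNReal.ofReal (h a)) ^ 2 := by gcongr <;> exact Eh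

lemma pdf_le_one (y : ℝ) : gaussianPDFReal 0 1 y ≤ 1 := by
  rw [gaussianPDFReal]
  have h1 : (1:ℝ) ≤ Real.sqrt (2 * π * (1:ℝ≥0)) := by
    refine Real.one_le_sqrt.mpr ?_
    push_cast
    nlinarith [Real.pi_gt_three]
  have h2 : rexp (-(y - 0) ^ 2 / (2 * (1:ℝ≥0))) ≤ 1 := by
    rw [Real.exp_le_one_iff]
    push_cast
    nlinarith [sq_nonneg (y - 0)]
  have h3 : (Real.sqrt (2 * π * (1:ℝ≥0)))⁻¹ ≤ 1 := by
    rw [inv_le_one_iff₀]; right; exact h1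
  calc (Real.sqrt (2 * π * (1:ℝ≥0)))⁻¹ * rexp (-(y - 0) ^ 2 / (2 * (1:ℝ≥0))) ≤ 1 * 1 :=
        mul_le_mul h3 h2 (Real.exp_nonneg _) zero_le_one
    _ = 1 := by ring

lemma pdf_mid (a b : ℝ) :
    gaussianPDFReal 0 1 a * gaussianPDFReal 0 1 b ≤ gaussianPDFReal 0 1 ((a + b) / 2) ^ 2 := by
  simp only [gaussianPDFReal, NNReal.coe_one, mul_one, sub_zero]
  set s := (Real.sqrt (2 * π))⁻¹ with hs
  have hs0 : (0:ℝ) ≤ s := by positivity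
  have he : rexp (-a ^ 2 / 2) * rexp (-b ^ 2 / 2) ≤ rexp (-((a + b) / 2) ^ 2 / 2) ^ 2 := by
    rw [← Real.exp_add, show rexp (-((a + b) / 2) ^ 2 / 2) ^ 2
      = rexp (-((a + b) / 2) ^ 2 / 2) * rexp (-((a + b) / 2) ^ 2 / 2) from sq _,
      ← Real.exp_add]
    apply Real.exp_le_exp.mpr
    nlinarith [sq_nonneg (a - b)]
  calc s * rexp (-a ^ 2 / 2) * (s * rexp (-b ^ 2 / 2))
      = s ^ 2 * (rexp (-a ^ 2 / 2) * rexp (-b ^ 2 / 2)) := by ring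
    _ ≤ s ^ 2 * rexp (-((a + b) / 2) ^ 2 / 2) ^ 2 :=
        mul_le_mul_of_nonneg_left he (by positivity)
    _ = (s * rexp (-((a + b) / 2) ^ 2 / 2)) ^ 2 := by ring

lemma dim1gauss {f g h : ℝ → ℝ} (hf : Measurable f) (hg : Measurable g) (hh : Measurable h)
    (hf0 : ∀ a, 0 ≤ f a) (hf1 : ∀ a, f a ≤ 1)
    (hg0 : ∀ a, 0 ≤ g a) (hg1 : ∀ a, g a ≤ 1)
    (hh0 : ∀ a, 0 ≤ h a)
    (hyp : ∀ a b, f a * g b ≤ h ((a + b) / 2) ^ 2) :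
    (∫⁻ a, ENNReal.ofReal (f a) ∂(gaussianReal 0 1)) *
      (∫⁻ a, ENNReal.ofReal (g a) ∂(gaussianReal 0 1)) ≤
      (∫⁻ a, ENNReal.ofReal (h a) ∂(gaussianReal 0 1)) ^ 2 := by
  have hγ : gaussianReal 0 1 = volume.withDensity (gaussianPDF 0 1) :=
    gaussianReal_of_var_ne_zero 0 one_ne_zero
  have conv : ∀ (q : ℝ → ℝ), Measurable q →
      ∫⁻ a, ENNReal.ofReal (q a) ∂(gaussianReal 0 1) =
        ∫⁻ a, ENNReal.ofReal (q a * gaussianPDFReal 0 1 a) := by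
    intro q hq
    rw [hγ, lintegral_withDensity_eq_lintegral_mul volume (measurable_gaussianPDF 0 1)
      (by exact ENNReal.measurable_ofReal.comp hq)]
    congr 1
    funext a
    simp only [Pi.mul_apply, gaussianPDF]
    rw [← ENNReal.ofReal_mul (gaussianPDFReal_nonneg 0 1 a), mul_comm]
  rw [conv f hf, conv g hg, conv h hh]
  refine dim1 (hf.mul (measurable_gaussianPDFReal 0 1)) (hg.mul (measurable_gaussianPDFReal 0 1))
    (hh.mul (measurable_gaussianPDFReal 0 1))
    (fun a => mul_nonneg (hf0 a) (gaussianPDFReal_nonneg 0 1 a))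
    (fun a => mul_le_one₀ (hf1 a) (gaussianPDFReal_nonneg 0 1 a) (pdf_le_one a))
    (fun a => mul_nonneg (hg0 a) (gaussianPDFReal_nonneg 0 1 a))
    (fun a => mul_le_one₀ (hg1 a) (gaussianPDFReal_nonneg 0 1 a) (pdf_le_one a))
    (fun a => mul_nonneg (hh0 a) (gaussianPDFReal_nonneg 0 1 a))
    (fun a b => ?_)
  calc f a * gaussianPDFReal 0 1 a * (g b * gaussianPDFReal 0 1 b)
      = f a * g b * (gaussianPDFReal 0 1 a * gaussianPDFReal 0 1 b) := by ring
    _ ≤ h ((a + b) / 2) ^ 2 * gaussianPDFReal 0 1 ((a + b) / 2) ^ 2 := by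
        apply mul_le_mul (hyp a b) (pdf_mid a b)
          (mul_nonneg (gaussianPDFReal_nonneg 0 1 a) (gaussianPDFReal_nonneg 0 1 b))
          (by positivity)
    _ = (h ((a + b) / 2) * gaussianPDFReal 0 1 ((a + b) / 2)) ^ 2 := by ring

noncomputable def γpi (n : ℕ) : Measure (Fin n → ℝ) :=
  Measure.pi (fun _ => gaussianReal 0 1)

instance (n : ℕ) : IsProbabilityMeasure (γpi n) := by
  unfold γpi; infer_instance

/-- Gaussian Brunn-Minkowski type midpoint inequality -/
lemma gbm : ∀ {n : ℕ} {A B S : Set (Fin n → ℝ)}, MeasurableSet A → MeasurableSet B →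
    MeasurableSet S → (∀ a ∈ A, ∀ b ∈ B, (fun i => (a i + b i) / 2) ∈ S) →
    γpi n A * γpi n B ≤ (γpi n S) ^ 2 := by
  intro n
  induction n with
  | zero =>
    intro A B S hA hB hS hmid
    rcases A.eq_empty_or_nonempty with rfl | ⟨a, ha⟩
    · simp
    rcases B.eq_empty_or_nonempty with rfl | ⟨b, hb⟩
    · simp
    have hAu : A = univ := eq_univ_of_forall (fun y => (Subsingleton.elim y a) ▸ ha)
    have hBu : B = univ := eq_univ_of_forall (fun y => (Subsingleton.elim y b) ▸ hb)
    have hSu : S = univ := eq_univ_of_forall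
      (fun y => (Subsingleton.elim y _) ▸ hmid a ha b hb)
    rw [hAu, hBu, hSu]
    simp
  | succ n ih =>
    intro A B S hA hB hS hmid
    set e := MeasurableEquiv.piFinSuccAbove (fun _ : Fin (n+1) => ℝ) 0 with he_def
    have mp : MeasurePreserving e (γpi (n+1))
        ((gaussianReal 0 1).prod (γpi n)) :=
      measurePreserving_piFinSuccAbove (fun _ : Fin (n+1) => gaussianReal 0 1) 0
    -- transported sets
    set A' := e.symm ⁻¹' A with hA'_def
    set B' := e.symm ⁻¹' B with hB'_def
    set S' := e.symm ⁻¹' S with hS'_def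
    have hA' : MeasurableSet A' := e.symm.measurable hA
    have hB' : MeasurableSet B' := e.symm.measurable hB
    have hS' : MeasurableSet S' := e.symm.measurable hS
    have transport : ∀ (W : Set (Fin (n+1) → ℝ)), MeasurableSet W →
        γpi (n+1) W = ((gaussianReal 0 1).prod (γpi n)) (e.symm ⁻¹' W) := by
      intro W hW
      rw [← mp.map_eq, Measure.map_apply e.measurable (e.symm.measurable hW)]
      congr 1
      ext t
      simp
    rw [transport A hA, transport B hB, transport S hS]
    rw [Measure.prod_apply hA', Measure.prod_apply hB', Measure.prod_apply hS']
    -- slice functions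
    set F := fun r : ℝ => (γpi n (Prod.mk r ⁻¹' A')).toReal with hF_def
    set G := fun r : ℝ => (γpi n (Prod.mk r ⁻¹' B')).toReal with hG_def
    set H := fun r : ℝ => (γpi n (Prod.mk r ⁻¹' S')).toReal with hH_def
    have hFmeas : Measurable F := (measurable_measure_prodMk_left hA').ennreal_toReal
    have hGmeas : Measurable G := (measurable_measure_prodMk_left hB').ennreal_toReal
    have hHmeas : Measurable H := (measurable_measure_prodMk_left hS').ennreal_toReal
    have hconv : ∀ (W : Set (ℝ × (Fin n → ℝ))) (hW : MeasurableSet W),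
        ∫⁻ r, γpi n (Prod.mk r ⁻¹' W) ∂(gaussianReal 0 1) =
        ∫⁻ r, ENNReal.ofReal ((γpi n (Prod.mk r ⁻¹' W)).toReal) ∂(gaussianReal 0 1) := by
      intro W hW
      refine lintegral_congr (fun r => ?_)
      rw [ENNReal.ofReal_toReal (measure_ne_top _ _)]
    rw [hconv A' hA', hconv B' hB', hconv S' hS']
    -- midpoint property of slices
    have hmid' : ∀ (a b : ℝ), ∀ y ∈ Prod.mk a ⁻¹' A', ∀ z ∈ Prod.mk b ⁻¹' B',
        (fun i => (y i + z i) / 2) ∈ Prod.mk ((a + b)/2) ⁻¹' S' := by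
      intro a b y hy z hz
      simp only [mem_preimage, hA'_def, hB'_def, hS'_def] at hy hz ⊢
      have := hmid _ hy _ hz
      have hsymm : ∀ (r : ℝ) (w : Fin n → ℝ), e.symm (r, w) = Fin.cons r w := by
        intro r w
        simp [he_def, MeasurableEquiv.piFinSuccAbove_symm_apply, Fin.insertNth_zero',
          Fin.consEquiv]
      have key : e.symm ((a + b) / 2, fun i => (y i + z i) / 2)
          = fun i => (e.symm (a, y) i + e.symm (b, z) i) / 2 := by
        rw [hsymm, hsymm, hsymm]
        funext i
        refine Fin.cases ?_ (fun j => ?_) i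
        · simp
        · simp
      rw [key]
      exact this
    refine dim1gauss hFmeas hGmeas hHmeas
      (fun a => ENNReal.toReal_nonneg) (fun a => ?_)
      (fun a => ENNReal.toReal_nonneg) (fun a => ?_)
      (fun a => ENNReal.toReal_nonneg) (fun a b => ?_)
    · exact ENNReal.toReal_le_of_le_ofReal zero_le_one (by simpa using prob_le_one)
    · exact ENNReal.toReal_le_of_le_ofReal zero_le_one (by simpa using prob_le_one)
    · -- apply induction hypothesis to slices
      have hmeas1 : MeasurableSet (Prod.mk a ⁻¹' A') := measurable_prodMk_left hA'
      have hmeas2 : MeasurableSet (Prod.mk b ⁻¹' B') := measurable_prodMk_left hB'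
      have hmeas3 : MeasurableSet (Prod.mk ((a+b)/2) ⁻¹' S') := measurable_prodMk_left hS'
      have := ih hmeas1 hmeas2 hmeas3 (hmid' a b)
      calc F a * G b = (γpi n (Prod.mk a ⁻¹' A') * γpi n (Prod.mk b ⁻¹' B')).toReal := by
            rw [ENNReal.toReal_mul]
        _ ≤ ((γpi n (Prod.mk ((a+b)/2) ⁻¹' S')) ^ 2).toReal := by
            apply ENNReal.toReal_mono _ this
            exact ENNReal.pow_ne_top (measure_ne_top _ _)
        _ = H ((a + b) / 2) ^ 2 := by rw [ENNReal.toReal_pow]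



lemma gauss_neg : Measure.map (fun r : ℝ => -r) (gaussianReal 0 1) = gaussianReal 0 1 := by
  have h := gaussianReal_map_const_mul (μ := 0) (v := 1) (-1)
  have he : ((-1 : ℝ) * ·) = (fun r : ℝ => -r) := by funext r; simp
  rw [he] at h
  rw [h]
  norm_num

lemma γpi_neg (n : ℕ) : MeasurePreserving (fun t : Fin n → ℝ => -t) (γpi n) (γpi n) := by
  have : MeasurePreserving (fun (t : Fin n → ℝ) (i : Fin n) => -(t i)) (γpi n) (γpi n) :=
    measurePreserving_pi _ _ (fun _ => ⟨measurable_neg, gauss_neg⟩)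
  exact this

/-- Anderson-type inequality for a fixed shift -/
lemma shift_ineq {E : Type*} [NormedAddCommGroup E] [NormedSpace ℝ E]
    [MeasurableSpace E] [BorelSpace E]
    {K : Set E} (hKc : IsClosed K) (hKconv : Convex ℝ K) (hKsym : K = -K)
    {n : ℕ} (y : Fin n → E) (v : E) :
    γpi n {t | (∑ i, t i • y i) + v ∈ K} ≤ γpi n {t | (∑ i, t i • y i) ∈ K} := by
  classical
  set T : (Fin n → ℝ) → E := fun t => ∑ i, t i • y i with hT_def
  have hTcont : Continuous T := by
    apply continuous_finset_sum
    exact fun i _ => (continuous_apply i).smul continuous_const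
  have hA : MeasurableSet {t | T t + v ∈ K} :=
    (hKc.measurableSet.preimage (by fun_prop) : MeasurableSet ((fun t => T t + v) ⁻¹' K))
  have hB : MeasurableSet {t | T t - v ∈ K} :=
    (hKc.measurableSet.preimage (by fun_prop) : MeasurableSet ((fun t => T t - v) ⁻¹' K))
  have hS : MeasurableSet {t | T t ∈ K} :=
    (hKc.measurableSet.preimage (by fun_prop) : MeasurableSet (T ⁻¹' K))
  have hTneg : ∀ t, T (-t) = -(T t) := by
    intro t
    simp only [hT_def, Pi.neg_apply, neg_smul, Finset.sum_neg_distrib]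
  have hBA : {t | T t - v ∈ K} = (fun t : Fin n → ℝ => -t) ⁻¹' {t | T t + v ∈ K} := by
    ext t
    simp only [mem_setOf_eq, mem_preimage, hTneg]
    constructor
    · intro h
      have : -(T t - v) ∈ -K := neg_mem_neg.mpr h
      rw [← hKsym] at this
      have he : -(T t - v) = -(T t) + v := by abel
      rwa [he] at this
    · intro h
      have : -(-(T t) + v) ∈ -K := neg_mem_neg.mpr h
      rw [← hKsym] at this
      have he : -(-(T t) + v) = T t - v := by abel
      rwa [he] at this
  have hvolB : γpi n {t | T t - v ∈ K} = γpi n {t | T t + v ∈ K} := by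
    rw [hBA]
    exact (γpi_neg n).measure_preimage hA.nullMeasurableSet
  have hmid : ∀ a ∈ {t | T t + v ∈ K}, ∀ b ∈ {t | T t - v ∈ K},
      (fun i => (a i + b i) / 2) ∈ {t | T t ∈ K} := by
    intro a ha b hb
    simp only [mem_setOf_eq] at ha hb ⊢
    have step : ∀ i : Fin n, ((a i + b i) / 2) • y i
        = (2⁻¹ : ℝ) • (a i • y i) + (2⁻¹ : ℝ) • (b i • y i) := by
      intro i
      have he : (a i + b i) / 2 = 2⁻¹ * a i + 2⁻¹ * b i := by ring
      rw [he, add_smul, mul_smul, mul_smul]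
    have hTmid : T (fun i => (a i + b i) / 2) = (2⁻¹ : ℝ) • (T a + v) + (2⁻¹ : ℝ) • (T b - v) := by
      simp only [hT_def]
      rw [Finset.sum_congr rfl (fun i _ => step i), Finset.sum_add_distrib,
        ← Finset.smul_sum, ← Finset.smul_sum, smul_add, smul_sub]
      abel
    rw [hTmid]
    exact hKconv ha hb (by norm_num) (by norm_num) (by norm_num)
  have := gbm hA hB hS hmid
  rw [hvolB, ← sq] at this
  by_contra hlt
  push_neg at hlt
  have h2 : γpi n {t | T t ∈ K} ^ 2 < γpi n {t | T t + v ∈ K} ^ 2 := by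
    apply ENNReal.pow_lt_pow_left two_ne_zero hlt
  exact absurd this (not_le.mpr h2)



lemma law {Ω : Type*} [MeasurableSpace Ω] (P : Measure Ω) [IsProbabilityMeasure P]
    (ξ : ℕ → Ω → ℝ) (hmeas : ∀ i, Measurable (ξ i))
    (hindep : iIndepFun ξ P)
    (hgauss : ∀ i, P.map (ξ i) = gaussianReal 0 1) (m : ℕ) :
    Measure.map (fun ω (i : Fin m) => ξ i ω) P = γpi m := by
  classical
  refine (Measure.pi_eq ?_).symm
  intro s hs
  rw [Measure.map_apply (measurable_pi_lambda (fun ω (i : Fin m) => ξ i ω) (fun i => hmeas i)) (MeasurableSet.univ_pi hs)]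
  set sets' : ℕ → Set ℝ := fun i => if h : i < m then s ⟨i, h⟩ else univ with hsets'
  have hsets'meas : ∀ i ∈ Finset.range m, MeasurableSet (sets' i) := by
    intro i _
    by_cases h : i < m
    · simp only [hsets', dif_pos h]; exact hs _
    · simp only [hsets', dif_neg h]; exact MeasurableSet.univ
  have hpre : (fun ω (i : Fin m) => ξ i ω) ⁻¹' (Set.pi univ s) =
      ⋂ i ∈ Finset.range m, ξ i ⁻¹' (sets' i) := by
    ext ω
    simp only [mem_preimage, Set.mem_pi, mem_univ, forall_true_left, Set.mem_iInter,
      Finset.mem_range]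
    constructor
    · intro h i hi
      simp only [hsets', dif_pos hi]
      exact h ⟨i, hi⟩
    · intro h i
      have := h i i.isLt
      simpa only [hsets', dif_pos i.isLt, Fin.eta] using this
  rw [hpre, (iIndepFun_iff_measure_inter_preimage_eq_mul.mp hindep (Finset.range m) hsets'meas)]
  rw [← Fin.prod_univ_eq_prod_range (fun i => P (ξ i ⁻¹' sets' i)) m]
  refine Finset.prod_congr rfl (fun i _ => ?_)
  have h1 : sets' (i : ℕ) = s i := by simp only [hsets', dif_pos i.isLt, Fin.eta]
  rw [h1, ← Measure.map_apply (hmeas i) (hs i), hgauss i]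

lemma step_ineq {E : Type*} [NormedAddCommGroup E] [NormedSpace ℝ E]
    [MeasurableSpace E] [BorelSpace E]
    {K : Set E} (hKc : IsClosed K) (hKconv : Convex ℝ K) (hKsym : K = -K)
    (x : ℕ → E) (m : ℕ) :
    γpi (m+1) {t | ∑ i : Fin (m+1), t i • x (i:ℕ) ∈ K} ≤
      γpi m {t | ∑ i : Fin m, t i • x (i:ℕ) ∈ K} := by
  classical
  set e := MeasurableEquiv.piFinSuccAbove (fun _ : Fin (m+1) => ℝ) (Fin.last m) with he_def
  have mp : MeasurePreserving e (γpi (m+1)) ((gaussianReal 0 1).prod (γpi m)) :=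
    measurePreserving_piFinSuccAbove (fun _ : Fin (m+1) => gaussianReal 0 1) (Fin.last m)
  have hTcont : Continuous (fun t : Fin (m+1) → ℝ => ∑ i, t i • x (i:ℕ)) :=
    continuous_finset_sum _ (fun i _ => (continuous_apply i).smul continuous_const)
  have hTcont' : Continuous (fun t : Fin m → ℝ => ∑ i, t i • x (i:ℕ)) :=
    continuous_finset_sum _ (fun i _ => (continuous_apply i).smul continuous_const)
  have hA : MeasurableSet {t : Fin (m+1) → ℝ | ∑ i, t i • x (i:ℕ) ∈ K} :=
    hKc.measurableSet.preimage hTcont.measurable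
  set A' := e.symm ⁻¹' {t : Fin (m+1) → ℝ | ∑ i, t i • x (i:ℕ) ∈ K} with hA'_def
  have hA' : MeasurableSet A' := e.symm.measurable hA
  have transport : γpi (m+1) {t : Fin (m+1) → ℝ | ∑ i, t i • x (i:ℕ) ∈ K} =
      ((gaussianReal 0 1).prod (γpi m)) A' := by
    rw [← mp.map_eq, Measure.map_apply e.measurable hA']
    congr 1
    ext t
    simp [hA'_def]
  have hsymm : ∀ (r : ℝ) (w : Fin m → ℝ), e.symm (r, w) = Fin.snoc w r := by
    intro r w
    simp [he_def, MeasurableEquiv.piFinSuccAbove_symm_apply, Fin.insertNth_last', Fin.snocEquiv]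
  have hslice : ∀ r : ℝ, Prod.mk r ⁻¹' A' =
      {w : Fin m → ℝ | (∑ j, w j • x (j:ℕ)) + r • x m ∈ K} := by
    intro r
    ext w
    simp only [mem_preimage, hA'_def, mem_setOf_eq, hsymm]
    rw [Fin.sum_univ_castSucc]
    simp [Fin.snoc_castSucc, Fin.snoc_last]
  rw [transport, Measure.prod_apply hA']
  calc ∫⁻ r, γpi m (Prod.mk r ⁻¹' A') ∂(gaussianReal 0 1)
      ≤ ∫⁻ _, γpi m {t : Fin m → ℝ | ∑ i, t i • x (i:ℕ) ∈ K} ∂(gaussianReal 0 1) := by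
        refine lintegral_mono (fun r => ?_)
        rw [hslice r]
        exact shift_ineq hKc hKconv hKsym (fun j : Fin m => x (j:ℕ)) (r • x m)
    _ = γpi m {t : Fin m → ℝ | ∑ i, t i • x (i:ℕ) ∈ K} := by
        rw [lintegral_const, measure_univ, mul_one]



end Aux

/-- for a centred Gaussian random element `X` in a separable Banach space
with Karhunen–Loève expansion `X = ∑ ξ_i x_i` (a.s. convergence in norm, `ξ_i` i.i.d.
standard normal), and a closed, convex, symmetric set `K`,
`P(X ∈ K) = lim_n P(∑_{i<n} ξ_i x_i ∈ K)`. -/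
theorem stmt3 {E : Type*} [NormedAddCommGroup E] [NormedSpace ℝ E]
    [TopologicalSpace.SeparableSpace E] [MeasurableSpace E] [BorelSpace E]
    {Ω : Type*} [MeasurableSpace Ω] (P : Measure Ω) [IsProbabilityMeasure P]
    (ξ : ℕ → Ω → ℝ) (hmeas : ∀ i, Measurable (ξ i))
    (hindep : iIndepFun ξ P)
    (hgauss : ∀ i, P.map (ξ i) = gaussianReal 0 1)
    (x : ℕ → E) (X : Ω → E) (hX : Measurable X)
    (hKL : ∀ᵐ ω ∂P, Tendsto (fun n => ∑ i ∈ Finset.range n, ξ i ω • x i)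
      atTop (nhds (X ω)))
    (K : Set E) (hKc : IsClosed K) (hKconv : Convex ℝ K) (hKsym : K = -K) :
    Tendsto (fun n => P {ω | ∑ i ∈ Finset.range n, ξ i ω • x i ∈ K})
      atTop (nhds (P {ω | X ω ∈ K})) := by
  classical
  set EvS : Set E → ℕ → Set Ω :=
    fun K' m => {ω | ∑ i ∈ Finset.range m, ξ i ω • x i ∈ K'} with hEvS_def
  have hEvent : ∀ (K' : Set E) (m : ℕ), EvS K' m =
      (fun ω (i : Fin m) => ξ i ω) ⁻¹' {t | ∑ i : Fin m, t i • x (i:ℕ) ∈ K'} := by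
    intro K' m
    ext ω
    simp only [hEvS_def, mem_setOf_eq, mem_preimage]
    rw [← Fin.sum_univ_eq_sum_range (fun i => ξ i ω • x i) m]
  have hTcont : ∀ m : ℕ, Continuous (fun t : Fin m → ℝ => ∑ i, t i • x (i:ℕ)) :=
    fun m => continuous_finset_sum _ (fun i _ => (continuous_apply i).smul continuous_const)
  have hAme : ∀ (K' : Set E), IsClosed K' → ∀ (m : ℕ),
      MeasurableSet {t : Fin m → ℝ | ∑ i, t i • x (i:ℕ) ∈ K'} :=
    fun K' hK' m => hK'.measurableSet.preimage (hTcont m).measurable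
  have hmeasEv : ∀ (K' : Set E), IsClosed K' → ∀ m, MeasurableSet (EvS K' m) := by
    intro K' hK' m
    rw [hEvent K' m]
    exact (measurable_pi_lambda (fun ω (i : Fin m) => ξ i ω) (fun i => hmeas i)) (hAme K' hK' m)
  have hPev : ∀ (K' : Set E), IsClosed K' → ∀ (m : ℕ),
      P (EvS K' m) = γpi m {t : Fin m → ℝ | ∑ i, t i • x (i:ℕ) ∈ K'} := by
    intro K' hK' m
    rw [hEvent K' m, ← law P ξ hmeas hindep hgauss m,
      Measure.map_apply (measurable_pi_lambda (fun ω (i : Fin m) => ξ i ω) (fun i => hmeas i))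
        (hAme K' hK' m)]
  have chain : ∀ (K' : Set E), IsClosed K' → Convex ℝ K' → K' = -K' → ∀ n m, n ≤ m →
      P (EvS K' m) ≤ P (EvS K' n) := by
    intro K' h1 h2 h3 n m hnm
    induction m, hnm using Nat.le_induction with
    | base => exact le_rfl
    | succ m hm ih =>
      refine le_trans ?_ ih
      rw [hPev K' h1 (m+1), hPev K' h1 m]
      exact step_ineq h1 h2 h3 x m
  set p := P {ω | X ω ∈ K} with hp_def
  -- upper bound part
  set BU : ℕ → Set Ω := fun N => ⋃ m, ⋃ (_ : N ≤ m), EvS K m with hBU_def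
  have hBUmeas : ∀ N, MeasurableSet (BU N) :=
    fun N => MeasurableSet.iUnion fun m => MeasurableSet.iUnion fun _ => hmeasEv K hKc m
  have hBUanti : Antitone BU := by
    intro N M hNM ω hω
    obtain ⟨m, hm⟩ := mem_iUnion.mp hω
    obtain ⟨hMm, hmem⟩ := mem_iUnion.mp hm
    exact mem_iUnion.mpr ⟨m, mem_iUnion.mpr ⟨le_trans hNM hMm, hmem⟩⟩
  have hBUtend : Tendsto (P ∘ BU) atTop (nhds (P (⋂ N, BU N))) :=
    tendsto_measure_iInter_atTop (fun N => (hBUmeas N).nullMeasurableSet) hBUanti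
      ⟨0, measure_ne_top P _⟩
  have hInt_le : P (⋂ N, BU N) ≤ p := by
    refine measure_mono_ae ?_
    filter_upwards [hKL] with ω hω hmem
    have hfreq : ∃ᶠ m in atTop, (∑ i ∈ Finset.range m, ξ i ω • x i) ∈ K := by
      refine frequently_atTop.mpr (fun N => ?_)
      have h1 : ω ∈ BU N := mem_iInter.mp hmem N
      obtain ⟨m, hm⟩ := mem_iUnion.mp h1
      obtain ⟨hNm, hmem'⟩ := mem_iUnion.mp hm
      exact ⟨m, hNm, hmem'⟩
    exact hKc.mem_of_frequently_of_tendsto hfreq hω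
  have ha_le_BU : ∀ N, P (EvS K N) ≤ P (BU N) :=
    fun N => measure_mono (fun ω h => mem_iUnion.mpr ⟨N, mem_iUnion.mpr ⟨le_rfl, h⟩⟩)
  -- lower bound part
  have hlow : ∀ n, p ≤ P (EvS K n) := by
    intro n
    set Kk : ℕ → Set E := fun k => Metric.cthickening (1/(k+1) : ℝ) K with hKk_def
    have hKkc : ∀ k, IsClosed (Kk k) := fun k => Metric.isClosed_cthickening
    have hKkconv : ∀ k, Convex ℝ (Kk k) := fun k => hKconv.cthickening _
    have hKksym : ∀ k, Kk k = -(Kk k) := by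
      intro k
      ext z
      have hinf : ∀ w : E, Metric.infEDist (-w) K = Metric.infEDist w K := by
        intro w
        conv_lhs => rw [hKsym]
        rw [show -K = Neg.neg '' K by simp [Set.image_neg_eq_neg],
          Metric.infEDist_image isometry_neg]
      simp only [Set.mem_neg, hKk_def, Metric.mem_cthickening_iff]
      rw [hinf z]
    have hclaim1 : ∀ k, p ≤ P (EvS (Kk k) n) := by
      intro k
      set D : ℕ → Set Ω := fun N => ⋂ m, ⋂ (_ : N ≤ m), EvS (Kk k) m with hD_def
      have hDmono : Monotone D := by
        intro N M hNM ω hω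
        simp only [hD_def, mem_iInter] at hω ⊢
        exact fun m hMm => hω m (le_trans hNM hMm)
      have hsub : {ω | X ω ∈ K} ≤ᵐ[P] ⋃ N, D N := by
        filter_upwards [hKL] with ω hω hXK
        have hpos : (0:ℝ) < 1/(k+1) := by positivity
        have hev : ∀ᶠ m in atTop,
            (∑ i ∈ Finset.range m, ξ i ω • x i) ∈ Metric.closedBall (X ω) (1/(k+1)) :=
          hω (Metric.closedBall_mem_nhds _ hpos)
        obtain ⟨N, hN⟩ := eventually_atTop.mp hev
        refine mem_iUnion.mpr ⟨N, ?_⟩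
        simp only [hD_def, mem_iInter]
        intro m hNm
        have := hN m hNm
        rw [Metric.mem_closedBall] at this
        exact Metric.mem_cthickening_of_dist_le _ _ _ _ hXK this
      have hbound : ∀ N, P (D N) ≤ P (EvS (Kk k) n) := by
        intro N
        have h1 : D N ⊆ EvS (Kk k) (max N n) := by
          intro ω hω
          simp only [hD_def, mem_iInter] at hω
          exact hω _ (le_max_left _ _)
        exact le_trans (measure_mono h1)
          (chain (Kk k) (hKkc k) (hKkconv k) (hKksym k) n (max N n) (le_max_right _ _))
      have hUtend : Tendsto (P ∘ D) atTop (nhds (P (⋃ N, D N))) :=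
        tendsto_measure_iUnion_atTop hDmono
      have : P (⋃ N, D N) ≤ P (EvS (Kk k) n) := le_of_tendsto' hUtend hbound
      exact le_trans (measure_mono_ae hsub) this
    have hiInter : (⋂ k, EvS (Kk k) n) = EvS K n := by
      ext ω
      simp only [mem_iInter, hEvS_def, mem_setOf_eq]
      constructor
      · intro hall
        set z := ∑ i ∈ Finset.range n, ξ i ω • x i with hz_def
        have hz : ∀ k : ℕ, Metric.infEDist z K ≤ ENNReal.ofReal (1/(k+1)) := by
          intro k
          have := hall k
          rwa [hKk_def, Metric.mem_cthickening_iff] at this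
        have hzero : Metric.infEDist z K = 0 := by
          refine le_antisymm ?_ zero_le
          have htend : Tendsto (fun k : ℕ => ENNReal.ofReal (1/(k+1):ℝ)) atTop (nhds 0) := by
            rw [show (0:ℝ≥0∞) = ENNReal.ofReal 0 by simp]
            exact ENNReal.tendsto_ofReal tendsto_one_div_add_atTop_nhds_zero_nat
          exact ge_of_tendsto' htend hz |>.trans (le_refl _) |>.trans_eq rfl
        have : z ∈ closure K := Metric.mem_closure_iff_infEDist_zero.mpr hzero
        rwa [hKc.closure_eq] at this
      · intro hz k
        exact Metric.self_subset_cthickening _ hz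
    have hCanti : Antitone (fun k => EvS (Kk k) n) := by
      intro k l hkl ω hω
      simp only [hEvS_def, mem_setOf_eq] at hω ⊢
      refine Metric.cthickening_mono ?_ K hω
      have hkl' : (k:ℝ) + 1 ≤ (l:ℝ) + 1 := by exact_mod_cast Nat.succ_le_succ hkl
      exact one_div_le_one_div_of_le (by positivity) hkl'
    have hclaim2 : Tendsto (fun k => P (EvS (Kk k) n)) atTop (nhds (P (EvS K n))) := by
      have := tendsto_measure_iInter_atTop (μ := P)
        (fun k => (hmeasEv (Kk k) (hKkc k) n).nullMeasurableSet) hCanti ⟨0, measure_ne_top P _⟩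
      rwa [hiInter] at this
    exact ge_of_tendsto' hclaim2 hclaim1
  -- combine
  have hIntEq : P (⋂ N, BU N) = p := by
    refine le_antisymm hInt_le ?_
    exact ge_of_tendsto' hBUtend (fun N => le_trans (hlow N) (ha_le_BU N))
  rw [hIntEq] at hBUtend
  refine tendsto_of_tendsto_of_tendsto_of_le_of_le tendsto_const_nhds hBUtend hlow ha_le_BU
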